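/- With Q(R) = 2·arctan(R²) and Φ(R) = 4R²/(1+R⁴), the function w(R) = R⁴/(1+R⁴) satisfies, for all R > 0, w''(R) + w'(R)/R − (4cos(2Q(R))/R²)·w(R) = (12R² − 4R⁶)/(1+R⁴)², and moreover (12R² − 4R⁶)/(1+R⁴)² = R·Φ'(R) + Φ(R). -/

import Mathlib

noncomputable def Q (R : ℝ) : ℝ := 2 * Real.arctan (R ^ 2)

noncomputable def Phi (R : ℝ) : ℝ := 4 * R ^ 2 / (1 + R ^ 4)

noncomputable def w (R : ℝ) : ℝ := R ^ 4 / (1 + R ^ 4)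

lemma hden (R : ℝ) : (1 : ℝ) + R ^ 4 ≠ 0 := by positivity

lemma hpow (R : ℝ) : HasDerivAt (fun R : ℝ => R ^ 4) (4 * R ^ 3) R := by
  simpa using (hasDerivAt_pow 4 R)

lemma hden' (R : ℝ) : HasDerivAt (fun R : ℝ => 1 + R ^ 4) (4 * R ^ 3) R :=
by
  exact ((hasDerivAt_const R 1).add (hpow R)).congr_deriv (zero_add _)

lemma hw (R : ℝ) : HasDerivAt w (4 * R ^ 3 / (1 + R ^ 4) ^ 2) R := by
  have := (hpow R).div (hden' R) (hden R)
  refine this.congr_deriv ?_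
  field_simp
  ring

lemma hderivw : deriv w = fun R => 4 * R ^ 3 / (1 + R ^ 4) ^ 2 :=
  funext fun R => (hw R).deriv

lemma hw2 (R : ℝ) :
    HasDerivAt (fun R : ℝ => 4 * R ^ 3 / (1 + R ^ 4) ^ 2)
      ((12 * R ^ 2 - 20 * R ^ 6) / (1 + R ^ 4) ^ 3) R := by
  have hnum : HasDerivAt (fun R : ℝ => 4 * R ^ 3) (12 * R ^ 2) R := by
    have := (hasDerivAt_pow 3 R).const_mul (4:ℝ)
    refine this.congr_deriv ?_
    ring
  have hd : HasDerivAt (fun R : ℝ => (1 + R ^ 4) ^ 2)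
      (8 * R ^ 3 * (1 + R ^ 4)) R := by
    have := (hden' R).pow 2
    refine this.congr_deriv ?_
    ring
  have hne : ((1 : ℝ) + R ^ 4) ^ 2 ≠ 0 := pow_ne_zero _ (hden R)
  have := hnum.div hd hne
  refine this.congr_deriv ?_
  field_simp
  ring

lemma hPhi (R : ℝ) : HasDerivAt Phi ((8 * R - 8 * R ^ 5) / (1 + R ^ 4) ^ 2) R := by
  have hnum : HasDerivAt (fun R : ℝ => 4 * R ^ 2) (8 * R) R := by
    have := (hasDerivAt_pow 2 R).const_mul (4:ℝ)
    refine this.congr_deriv ?_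
    ring
  have := hnum.div (hden' R) (hden R)
  refine this.congr_deriv ?_
  field_simp
  ring

lemma cos2arctan (x : ℝ) : Real.cos (2 * Real.arctan x) = (1 - x ^ 2) / (1 + x ^ 2) := by
  have hx : (0:ℝ) < 1 + x ^ 2 := by positivity
  rw [Real.cos_two_mul, Real.cos_arctan]
  rw [div_pow, one_pow, Real.sq_sqrt hx.le]
  field_simp
  ring

theorem v10_equation :
    ∀ R : ℝ, 0 < R →
      (deriv (deriv w) R + deriv w R / R - (4 * Real.cos (2 * Q R) / R ^ 2) * w R
        = (12 * R ^ 2 - 4 * R ^ 6) / (1 + R ^ 4) ^ 2) ∧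
      (12 * R ^ 2 - 4 * R ^ 6) / (1 + R ^ 4) ^ 2 = R * deriv Phi R + Phi R := by
  intro R hR
  have hRne : R ≠ 0 := hR.ne'
  have hne : (1 : ℝ) + R ^ 4 ≠ 0 := hden R
  have hne2 : (1 : ℝ) + (R ^ 2) ^ 2 ≠ 0 := by positivity
  have hcos : Real.cos (2 * Q R) = 2 * ((1 - (R^2)^2) / (1 + (R^2)^2)) ^ 2 - 1 := by
    unfold Q
    rw [show (2 : ℝ) * (2 * Real.arctan (R ^ 2)) = 2 * (2 * Real.arctan (R ^ 2)) from rfl,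
      Real.cos_two_mul, cos2arctan]
  constructor
  · rw [hderivw, (hw2 R).deriv, hcos]
    simp only []
    unfold w
    field_simp
    ring
  · rw [(hPhi R).deriv]
    unfold Phi
    field_simp
    ring
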